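/- Assume the resolution hypothesis: every object W of T fits into a distinguished triangle G₁ → G₀ →w W → G₁⟦1⟧ in which G₀ and G₁ lie in add(Σ•G) and the map Hom(G, G₀⟦p⟧) → Hom(G, W⟦p⟧), u ↦ u ≫ w⟦p⟧, is surjective for every p ∈ ℤ. Let f : X → Y and g : Y → Z be morphisms of T such that u ≫ f⟦p⟧ = 0 for all p ∈ ℤ and all u : G → X⟦p⟧, and u' ≫ g⟦p⟧ = 0 for all p ∈ ℤ and all u' : G → Y⟦p⟧. Then f ≫ g = 0. (The ideal of morphisms killed by the functor F = ⊕_p Hom(G, Σ^p −) has square zero.) -/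

import Mathlib

/-!
Statement 9. Under the resolution hypothesis, the ideal of morphisms killed by the
functor `F = ⊕ₚ Hom(G, Σᵖ −)` has square zero: if `u ≫ f⟦p⟧' = 0` for all `u : G ⟶ X⟦p⟧`
and `u' ≫ g⟦p⟧' = 0` for all `u' : G ⟶ Y⟦p⟧`, then `f ≫ g = 0`.
-/

open CategoryTheory CategoryTheory.Limits CategoryTheory.Pretriangulated

variable {k : Type*} [CommRing k] {C : Type*} [Category C] [Preadditive C]
  [CategoryTheory.Linear k C] [HasZeroObject C] [HasShift C ℤ]
  [∀ n : ℤ, (shiftFunctor C n).Additive] [Pretriangulated C] [HasFiniteBiproducts C]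

/-- An object `X` lies in `add(Σ• G)` if it is a direct summand of a finite direct sum
of shifts of `G`. -/
def InAddShifts (G X : C) : Prop :=
  ∃ (n : ℕ) (ps : Fin n → ℤ) (r : X ⟶ ⨁ fun i : Fin n => G⟦ps i⟧)
    (s : (⨁ fun i : Fin n => G⟦ps i⟧) ⟶ X), r ≫ s = 𝟙 X

/-- If `φ` is killed by `Hom(G, Σᵖ −)` for all `p`, then any map from a shift of `G`
composed with `φ` is zero. -/
lemma keyA {G V V' : C} (φ : V ⟶ V')
    (hφ : ∀ (p : ℤ) (u : G ⟶ V⟦p⟧), u ≫ φ⟦p⟧' = 0)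
    (p : ℤ) (v : G⟦p⟧ ⟶ V) : v ≫ φ = 0 := by
  have e : (G⟦p⟧)⟦-p⟧ ≅ G := (shiftFunctorCompIsoId C p (-p) (by ring)).app G
  have h := hφ (-p) (e.inv ≫ v⟦(-p)⟧')
  rw [Category.assoc, ← Functor.map_comp] at h
  have h2 : (v ≫ φ)⟦(-p)⟧' = 0 := by
    rw [← Category.id_comp ((v ≫ φ)⟦(-p)⟧'), ← e.hom_inv_id, Category.assoc, h,
      comp_zero]
  exact (shiftFunctor C (-p)).map_injective (by simpa using h2)

/-- Same for a double shift of `G`. -/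
lemma keyB {G V V' : C} (φ : V ⟶ V')
    (hφ : ∀ (p : ℤ) (u : G ⟶ V⟦p⟧), u ≫ φ⟦p⟧' = 0)
    (p q : ℤ) (v : (G⟦p⟧)⟦q⟧ ⟶ V) : v ≫ φ = 0 := by
  have e : G⟦p + q⟧ ≅ (G⟦p⟧)⟦q⟧ := (shiftFunctorAdd C p q).app G
  have h := keyA φ hφ (p + q) (e.hom ≫ v)
  rw [Category.assoc] at h
  rw [← Category.id_comp (v ≫ φ), ← e.inv_hom_id, Category.assoc, h, comp_zero]

/-- Any map out of an object of `add(Σ• G)` composed with `φ` is zero. -/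
lemma keyC {G V V' : C} (φ : V ⟶ V')
    (hφ : ∀ (p : ℤ) (u : G ⟶ V⟦p⟧), u ≫ φ⟦p⟧' = 0)
    {W : C} (hW : InAddShifts G W) (ψ : W ⟶ V) : ψ ≫ φ = 0 := by
  obtain ⟨n, ps, r, s, hrs⟩ := hW
  have h : s ≫ ψ ≫ φ = 0 := by
    apply biproduct.hom_ext'
    intro i
    simpa using keyA φ hφ (ps i) (biproduct.ι (fun i : Fin n => G⟦ps i⟧) i ≫ s ≫ ψ)
  calc ψ ≫ φ = r ≫ s ≫ ψ ≫ φ := by rw [← Category.assoc, hrs, Category.id_comp]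
  _ = 0 := by rw [h, comp_zero]

/-- Any map out of the shift of an object of `add(Σ• G)` composed with `φ` is zero. -/
lemma keyD {G V V' : C} (φ : V ⟶ V')
    (hφ : ∀ (p : ℤ) (u : G ⟶ V⟦p⟧), u ≫ φ⟦p⟧' = 0)
    {W : C} (hW : InAddShifts G W) (q : ℤ) (ψ : W⟦q⟧ ⟶ V) : ψ ≫ φ = 0 := by
  obtain ⟨n, ps, r, s, hrs⟩ := hW
  have b := (shiftFunctor C q).mapBiproduct (fun i : Fin n => G⟦ps i⟧)
  have h : b.inv ≫ (shiftFunctor C q).map s ≫ ψ ≫ φ = 0 := by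
    apply biproduct.hom_ext'
    intro i
    have := keyB φ hφ (ps i) q ((biproduct.ι ((shiftFunctor C q).obj ∘ fun i : Fin n => G⟦ps i⟧) i ≫ b.inv ≫ (shiftFunctor C q).map s) ≫ ψ)
    simpa [Category.assoc] using this
  have h2 : (shiftFunctor C q).map s ≫ ψ ≫ φ = 0 := by
    rw [← Category.id_comp ((shiftFunctor C q).map s ≫ ψ ≫ φ), ← b.hom_inv_id, Category.assoc, h,
      comp_zero]
  calc ψ ≫ φ = (shiftFunctor C q).map r ≫ (shiftFunctor C q).map s ≫ ψ ≫ φ := by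
        rw [← Category.assoc, ← Functor.map_comp, hrs]; simp
  _ = 0 := by rw [h2, comp_zero]

theorem stmt_9 (G : C)
    (hres : ∀ W : C, ∃ (G₁ G₀ : C) (a : G₁ ⟶ G₀) (w : G₀ ⟶ W) (δ : W ⟶ G₁⟦(1 : ℤ)⟧),
      InAddShifts G G₁ ∧ InAddShifts G G₀ ∧
      (Triangle.mk a w δ ∈ distTriang C) ∧
      ∀ p : ℤ, Function.Surjective (fun u : G ⟶ G₀⟦p⟧ => u ≫ w⟦p⟧'))
    {X Y Z : C} (f : X ⟶ Y) (g : Y ⟶ Z)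
    (hf : ∀ (p : ℤ) (u : G ⟶ X⟦p⟧), u ≫ f⟦p⟧' = 0)
    (hg : ∀ (p : ℤ) (u' : G ⟶ Y⟦p⟧), u' ≫ g⟦p⟧' = 0) :
    f ≫ g = 0 := by
  obtain ⟨G₁, G₀, a, w, δ, hG₁, hG₀, hT, -⟩ := hres X
  -- `w ≫ f = 0` since `G₀ ∈ add(Σ• G)` and `F(f) = 0`.
  have hwf : w ≫ f = 0 := keyC f hf hG₀ w
  -- hence `f` factors through `δ : X ⟶ G₁⟦1⟧`.
  obtain ⟨h, hh⟩ := Triangle.yoneda_exact₃ _ hT f hwf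
  -- and `h ≫ g = 0` since `G₁⟦1⟧` is a shift of an object of `add(Σ• G)` and `F(g) = 0`.
  have hhg : h ≫ g = 0 := keyD g hg hG₁ 1 h
  rw [hh]
  exact (Category.assoc _ _ _).trans ((congrArg _ hhg).trans comp_zero)
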